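/- The sequences (a_{n,s})_{n≥1} with a_{n,s} = (ns)^{-n+(-1)^n}, for s ranging over (1,∞), are linearly independent in the space of real sequences; consequently their span is a vector space of dimension continuum consisting (apart from 0) of absolutely summable sequences for which the ratio test fails. -/

import Mathlib

open Filter Topology

/-- The sequence `a n s = (n s)^{-n + (-1)^n}`. -/
noncomputable def seqA (n : ℕ) (s : ℝ) : ℝ :=
  ((n : ℝ) * s) ^ (-(n : ℤ) + (-1 : ℤ) ^ n)

namespace Stmt12Aux

def expE (n : ℕ) : ℤ := -(n : ℤ) + (-1 : ℤ) ^ n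

lemma seqA_eq (n : ℕ) (s : ℝ) : seqA n s = ((n : ℝ) * s) ^ expE n := rfl

lemma neg_one_pow_le_one (k : ℕ) : ((-1 : ℤ) ^ k) ≤ 1 := by
  rcases Nat.even_or_odd k with h | h
  · simp [h.neg_one_pow]
  · simp [h.neg_one_pow]

lemma expE_le (n : ℕ) : expE (n + 1) ≤ -(n : ℤ) := by
  have h := neg_one_pow_le_one (n + 1)
  unfold expE
  push_cast
  linarith

lemma expE_two_mul_add_one (m : ℕ) : expE (2 * m + 1) = -(2 * (m : ℤ) + 2) := by
  unfold expE
  rw [Odd.neg_one_pow (odd_two_mul_add_one m)]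
  push_cast
  ring

lemma expE_two_mul_add_two (m : ℕ) : expE (2 * m + 2) = -(2 * (m : ℤ) + 1) := by
  unfold expE
  rw [Even.neg_one_pow ⟨m + 1, by ring⟩]
  push_cast
  ring

noncomputable def P (t : ℝ) (n : ℕ) : ℝ := (((n : ℝ) + 1) * t) ^ expE (n + 1)

lemma P_pos {t : ℝ} (ht : 0 < t) (n : ℕ) : 0 < P t n :=
  zpow_pos (by positivity) _

lemma P_le {t : ℝ} (ht : 1 ≤ t) {n : ℕ} (hn : 1 ≤ n) : P t n ≤ (1 / 2) ^ n := by
  have hn1 : (1 : ℝ) ≤ (n : ℝ) := by exact_mod_cast hn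
  have hb : (1 : ℝ) ≤ ((n : ℝ) + 1) * t := by nlinarith
  have h2 : (2 : ℝ) ≤ ((n : ℝ) + 1) * t := by nlinarith
  calc P t n ≤ (((n : ℝ) + 1) * t) ^ (-(n : ℤ)) := zpow_le_zpow_right₀ hb (expE_le n)
    _ = ((((n : ℝ) + 1) * t) ^ n)⁻¹ := by rw [zpow_neg, zpow_natCast]
    _ ≤ ((2 : ℝ) ^ n)⁻¹ := by gcongr
    _ = (1 / 2) ^ n := by rw [one_div, inv_pow]

lemma pow_div_le_three (k : ℕ) (hk : 1 ≤ k) : (((k : ℝ) + 1) / k) ^ k ≤ 3 := by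
  have hk0 : (0 : ℝ) < k := by exact_mod_cast hk
  have h1 : ((k : ℝ) + 1) / k = 1 / k + 1 := by field_simp; ring
  calc (((k : ℝ) + 1) / k) ^ k ≤ (Real.exp (1 / k)) ^ k := by
        rw [h1]
        exact pow_le_pow_left₀ (by positivity) (Real.add_one_le_exp _) k
    _ = Real.exp ((k : ℝ) * (1 / k)) := (Real.exp_nat_mul _ k).symm
    _ = Real.exp 1 := by rw [mul_one_div, div_self hk0.ne']
    _ ≤ 3 := le_of_lt (lt_of_lt_of_le Real.exp_one_lt_d9 (by norm_num))

lemma third_le (k : ℕ) (hk : 1 ≤ k) : (1 / 3 : ℝ) ≤ ((k : ℝ) / (k + 1)) ^ k := by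
  have hk0 : (0 : ℝ) < k := by exact_mod_cast hk
  have h3 := pow_div_le_three k hk
  have hpos : (0 : ℝ) < (((k : ℝ) + 1) / k) ^ k := by positivity
  have heq : ((k : ℝ) / (k + 1)) ^ k = ((((k : ℝ) + 1) / k) ^ k)⁻¹ := by
    rw [← inv_pow, inv_div]
  rw [heq, show (1 / 3 : ℝ) = 3⁻¹ from one_div 3]
  gcongr

lemma P_even (t : ℝ) (m : ℕ) :
    P t (2 * m) = (((2 * (m : ℝ) + 1) * t) ^ (2 * m + 2))⁻¹ := by
  unfold P
  rw [expE_two_mul_add_one,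
    show (-(2 * (m : ℤ) + 2)) = -((2 * m + 2 : ℕ) : ℤ) by push_cast; ring,
    zpow_neg, zpow_natCast, show ((2 * m : ℕ) : ℝ) + 1 = 2 * (m : ℝ) + 1 by push_cast; ring]

lemma P_odd (t : ℝ) (m : ℕ) :
    P t (2 * m + 1) = (((2 * (m : ℝ) + 2) * t) ^ (2 * m + 1))⁻¹ := by
  unfold P
  rw [show (2 * m + 1 + 1 : ℕ) = 2 * m + 2 from rfl, expE_two_mul_add_two,
    show (-(2 * (m : ℤ) + 1)) = -((2 * m + 1 : ℕ) : ℤ) by push_cast; ring,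
    zpow_neg, zpow_natCast, show ((2 * m + 1 : ℕ) : ℝ) + 1 = 2 * (m : ℝ) + 2 by push_cast; ring]

lemma P_even' (t : ℝ) (m : ℕ) :
    P t (2 * m + 2) = (((2 * (m : ℝ) + 3) * t) ^ (2 * m + 4))⁻¹ := by
  have h := P_even t (m + 1)
  rw [show 2 * (m + 1) = 2 * m + 2 by ring] at h
  rw [h]
  norm_num
  ring

lemma q_even {t : ℝ} (ht : 1 < t) (m : ℕ) :
    ((2 * (m : ℝ) + 1) * t) / 3 ≤ P t (2 * m + 1) / P t (2 * m) := by
  have ht0 : (0 : ℝ) < t := lt_trans one_pos ht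
  have ha0 : (0 : ℝ) < (2 * (m : ℝ) + 1) * t := by positivity
  have hb0 : (0 : ℝ) < (2 * (m : ℝ) + 2) * t := by positivity
  rw [P_even, P_odd, inv_div_inv]
  have hdiv : ((2 * (m : ℝ) + 1) * t) / ((2 * (m : ℝ) + 2) * t)
      = (2 * (m : ℝ) + 1) / (2 * (m : ℝ) + 2) := by
    rw [mul_div_mul_right _ _ ht0.ne']
  have hkey : ((2 * (m : ℝ) + 1) * t) ^ (2 * m + 2) / ((2 * (m : ℝ) + 2) * t) ^ (2 * m + 1)
      = ((2 * (m : ℝ) + 1) * t) * ((2 * (m : ℝ) + 1) / (2 * (m : ℝ) + 2)) ^ (2 * m + 1) := by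
    rw [show 2 * m + 2 = (2 * m + 1) + 1 by ring, pow_succ']
    rw [mul_div_assoc, ← div_pow, hdiv]
  rw [hkey]
  have hthird : (1 / 3 : ℝ) ≤ ((2 * (m : ℝ) + 1) / (2 * (m : ℝ) + 2)) ^ (2 * m + 1) := by
    have := third_le (2 * m + 1) (by omega)
    have hc : ((2 * m + 1 : ℕ) : ℝ) = 2 * (m : ℝ) + 1 := by push_cast; ring
    rw [hc] at this
    calc (1 / 3 : ℝ) ≤ ((2 * (m : ℝ) + 1) / (2 * (m : ℝ) + 1 + 1)) ^ (2 * m + 1) := this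
      _ = ((2 * (m : ℝ) + 1) / (2 * (m : ℝ) + 2)) ^ (2 * m + 1) := by ring_nf
  calc ((2 * (m : ℝ) + 1) * t) / 3 = ((2 * (m : ℝ) + 1) * t) * (1 / 3) := by ring
    _ ≤ ((2 * (m : ℝ) + 1) * t) * ((2 * (m : ℝ) + 1) / (2 * (m : ℝ) + 2)) ^ (2 * m + 1) :=
        mul_le_mul_of_nonneg_left hthird ha0.le

lemma q_odd {t : ℝ} (ht : 1 < t) (m : ℕ) :
    P t (2 * m + 2) / P t (2 * m + 1) ≤ 1 / (2 * (m : ℝ) + 3) := by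
  have ht0 : (0 : ℝ) < t := lt_trans one_pos ht
  have hb0 : (0 : ℝ) < (2 * (m : ℝ) + 2) * t := by positivity
  have hB0 : (0 : ℝ) < (2 * (m : ℝ) + 3) * t := by positivity
  have hB1 : (2 * (m : ℝ) + 3) ≤ (2 * (m : ℝ) + 3) * t := by nlinarith
  rw [P_even', P_odd, inv_div_inv]
  have hsplit : ((2 * (m : ℝ) + 2) * t) ^ (2 * m + 1) / ((2 * (m : ℝ) + 3) * t) ^ (2 * m + 4)
      = (((2 * (m : ℝ) + 2) * t) / ((2 * (m : ℝ) + 3) * t)) ^ (2 * m + 1)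
        / ((2 * (m : ℝ) + 3) * t) ^ 3 := by
    rw [div_pow, div_div, ← pow_add]
  rw [hsplit]
  have hle1 : (((2 * (m : ℝ) + 2) * t) / ((2 * (m : ℝ) + 3) * t)) ^ (2 * m + 1) ≤ 1 := by
    apply pow_le_one₀ (by positivity)
    rw [div_le_one hB0]
    nlinarith
  have hB3 : (2 * (m : ℝ) + 3) ≤ ((2 * (m : ℝ) + 3) * t) ^ 3 := by
    calc (2 * (m : ℝ) + 3) ≤ (2 * (m : ℝ) + 3) * t := hB1
      _ ≤ ((2 * (m : ℝ) + 3) * t) ^ 3 := le_self_pow₀ (by nlinarith) (by norm_num)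
  calc (((2 * (m : ℝ) + 2) * t) / ((2 * (m : ℝ) + 3) * t)) ^ (2 * m + 1)
        / ((2 * (m : ℝ) + 3) * t) ^ 3
      ≤ 1 / ((2 * (m : ℝ) + 3) * t) ^ 3 := by gcongr
    _ ≤ 1 / (2 * (m : ℝ) + 3) := by
        apply one_div_le_one_div_of_le (by positivity) hB3

noncomputable def tmin (c : {s : ℝ // 1 < s} →₀ ℝ) (hne : c.support.Nonempty) : {s : ℝ // 1 < s} :=
  c.support.min' hne

noncomputable def g (c : {s : ℝ // 1 < s} →₀ ℝ) (hne : c.support.Nonempty) (n : ℕ) : ℝ :=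
  ∑ j ∈ c.support, c j * (j.1 / (tmin c hne).1) ^ expE (n + 1)

lemma factor (c : {s : ℝ // 1 < s} →₀ ℝ) (hne : c.support.Nonempty) (n : ℕ) :
    ∑ j ∈ c.support, c j * seqA (n + 1) j.1 = g c hne n * P (tmin c hne).1 n := by
  unfold g P
  rw [Finset.sum_mul]
  refine Finset.sum_congr rfl fun j hj => ?_
  have ht0 : (0 : ℝ) < (tmin c hne).1 := lt_trans one_pos (tmin c hne).2
  have hbase : ((n + 1 : ℕ) : ℝ) * j.1
      = (j.1 / (tmin c hne).1) * (((n : ℝ) + 1) * (tmin c hne).1) := by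
    field_simp
    push_cast
    ring
  rw [seqA_eq, hbase, mul_zpow, ← mul_assoc]

lemma g_tendsto (c : {s : ℝ // 1 < s} →₀ ℝ) (hne : c.support.Nonempty) :
    Tendsto (g c hne) atTop (𝓝 (c (tmin c hne))) := by
  have hsum : (∑ j ∈ c.support, if j = tmin c hne then c j else 0) = c (tmin c hne) := by
    rw [Finset.sum_ite_eq' c.support (tmin c hne) fun j => c j]
    simp [tmin, Finset.min'_mem]
  rw [← hsum]
  unfold g
  apply tendsto_finset_sum
  intro j hj
  rcases eq_or_ne j (tmin c hne) with hjt | hjt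
  · rw [if_pos hjt, hjt]
    have ht0 : (0 : ℝ) < (tmin c hne).1 := lt_trans one_pos (tmin c hne).2
    simp only [div_self ht0.ne', one_zpow, mul_one]
    exact tendsto_const_nhds
  · rw [if_neg hjt]
    have ht1 : (1 : ℝ) < (tmin c hne).1 := (tmin c hne).2
    have ht0 : (0 : ℝ) < (tmin c hne).1 := lt_trans one_pos ht1
    have hj0 : (0 : ℝ) < j.1 := lt_trans one_pos j.2
    have hlt : (tmin c hne).1 < j.1 := by
      have hle : tmin c hne ≤ j := Finset.min'_le _ _ hj
      exact lt_of_le_of_ne hle fun h => hjt (Subtype.ext h.symm)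
    have hr1 : 1 < j.1 / (tmin c hne).1 := (one_lt_div ht0).2 hlt
    have h0 : Tendsto (fun n : ℕ => (j.1 / (tmin c hne).1) ^ expE (n + 1)) atTop (𝓝 0) := by
      have hb : ∀ n : ℕ, (j.1 / (tmin c hne).1) ^ expE (n + 1) ≤ ((tmin c hne).1 / j.1) ^ n := by
        intro n
        calc (j.1 / (tmin c hne).1) ^ expE (n + 1)
            ≤ (j.1 / (tmin c hne).1) ^ (-(n : ℤ)) := zpow_le_zpow_right₀ hr1.le (expE_le n)
          _ = ((tmin c hne).1 / j.1) ^ n := by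
              rw [zpow_neg, zpow_natCast, ← inv_pow, inv_div]
      exact squeeze_zero (fun n => le_of_lt (zpow_pos (lt_trans one_pos hr1) _)) hb
        (tendsto_pow_atTop_nhds_zero_of_lt_one (by positivity) ((div_lt_one hj0).2 hlt))
    have := h0.const_mul (c j)
    simpa using this

lemma props (c : {s : ℝ // 1 < s} →₀ ℝ) (hne : c.support.Nonempty)
    (x : ℕ → ℝ) (hx : ∀ n, x n = ∑ j ∈ c.support, c j * seqA (n + 1) j.1) :
    Summable (fun n => |x n|) ∧
      liminf (fun n : ℕ => (↑|x (n + 1) / x n| : EReal)) atTop = 0 ∧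
      limsup (fun n : ℕ => (↑|x (n + 1) / x n| : EReal)) atTop = ⊤ := by
  set t : ℝ := (tmin c hne).1 with htdef
  have ht1 : 1 < t := (tmin c hne).2
  have ht0 : 0 < t := lt_trans one_pos ht1
  have hα : c (tmin c hne) ≠ 0 := Finsupp.mem_support_iff.1 (Finset.min'_mem _ _)
  have hxf : ∀ n, x n = g c hne n * P t n := fun n => by rw [hx n, factor]
  have hgt : Tendsto (g c hne) atTop (𝓝 (c (tmin c hne))) := g_tendsto c hne
  -- summability
  have hsumx : Summable x := by
    have hPO : (fun n => P t n) =O[atTop] fun n => ((1 : ℝ) / 2) ^ n := by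
      apply Asymptotics.IsBigO.of_bound 1
      filter_upwards [eventually_ge_atTop 1] with n hn
      rw [one_mul, Real.norm_eq_abs, Real.norm_eq_abs, abs_of_pos (P_pos ht0 n),
        abs_of_pos (by positivity : (0:ℝ) < (1/2)^n)]
      exact P_le ht1.le hn
    have hO : x =O[atTop] fun n => ((1 : ℝ) / 2) ^ n := by
      have h1 := (hgt.isBigO_one ℝ).mul hPO
      simp only [one_mul] at h1
      have hxeq : x = fun n => g c hne n * P t n := funext hxf
      rw [hxeq]
      exact h1
    exact summable_of_isBigO_nat
      (summable_geometric_of_lt_one (by norm_num) (by norm_num)) hO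
  have hsabs : Summable fun n => |x n| := summable_abs_iff.2 hsumx
  -- ratio
  have hufact : ∀ n, |x (n + 1) / x n|
      = (|g c hne (n + 1)| / |g c hne n|) * (P t (n + 1) / P t n) := by
    intro n
    rw [abs_div, hxf n, hxf (n + 1), abs_mul, abs_mul,
      abs_of_pos (P_pos ht0 _), abs_of_pos (P_pos ht0 _), div_mul_div_comm]
  have hrat1 : Tendsto (fun n => |g c hne (n + 1)| / |g c hne n|) atTop (𝓝 1) := by
    have habs : Tendsto (fun n => |g c hne n|) atTop (𝓝 |c (tmin c hne)|) := hgt.abs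
    have h2 : Tendsto (fun n => |g c hne (n + 1)|) atTop (𝓝 |c (tmin c hne)|) := by
      have := habs.comp (tendsto_add_atTop_nat 1)
      exact this
    have h3 := h2.div habs (abs_ne_zero.2 hα)
    rw [div_self (abs_ne_zero.2 hα)] at h3
    exact h3
  -- even subsequence tends to infinity
  have heven : Tendsto (fun m : ℕ => |x (2 * m + 1) / x (2 * m)|) atTop atTop := by
    have hq : ∀ m : ℕ, (2 * (m : ℝ) + 1) / 3 ≤ P t (2 * m + 1) / P t (2 * m) := by
      intro m
      calc (2 * (m : ℝ) + 1) / 3 ≤ ((2 * (m : ℝ) + 1) * t) / 3 := by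
            nlinarith [Nat.cast_nonneg (α := ℝ) m]
        _ ≤ _ := q_even ht1 m
    have hev : ∀ᶠ m : ℕ in atTop, (2 * (m : ℝ) + 1) / 6 ≤ |x (2 * m + 1) / x (2 * m)| := by
      have h12 : ∀ᶠ n in atTop, (1 / 2 : ℝ) ≤ |g c hne (n + 1)| / |g c hne n| :=
        hrat1.eventually (eventually_ge_nhds (by norm_num))
      have h2m : Tendsto (fun m : ℕ => 2 * m) atTop atTop :=
        tendsto_atTop_mono (fun m => by simp only [id_eq]; omega) tendsto_id
      filter_upwards [h2m.eventually h12] with m hm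
      rw [hufact (2 * m)]
      calc (2 * (m : ℝ) + 1) / 6 = (1 / 2) * ((2 * (m : ℝ) + 1) / 3) := by ring
        _ ≤ (|g c hne (2 * m + 1)| / |g c hne (2 * m)|) * (P t (2 * m + 1) / P t (2 * m)) :=
            mul_le_mul hm (hq m) (by positivity) (le_trans (by norm_num) hm)
    apply tendsto_atTop_mono' atTop hev
    have hbase : Tendsto (fun m : ℕ => (m : ℝ) / 6) atTop atTop :=
      tendsto_natCast_atTop_atTop.atTop_div_const (by norm_num)
    exact tendsto_atTop_mono (fun m => by
      have h := Nat.cast_nonneg (α := ℝ) m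
      linarith) hbase
  -- limsup = ⊤
  have hlimsup : limsup (fun n : ℕ => (↑|x (n + 1) / x n| : EReal)) atTop = ⊤ := by
    rw [EReal.eq_top_iff_forall_lt]
    intro y
    have hfreq : ∃ᶠ n in atTop, (y + 1 : ℝ) ≤ |x (n + 1) / x n| := by
      rw [frequently_atTop]
      intro N
      obtain ⟨M, hM⟩ := eventually_atTop.1 (heven.eventually_ge_atTop (y + 1))
      have h1 : N ≤ 2 * max M N := by
        have := le_max_right M N; omega
      exact ⟨2 * max M N, h1, hM _ (le_max_left _ _)⟩
    have hcoe : ∃ᶠ n in atTop, ((y + 1 : ℝ) : EReal) ≤ (↑|x (n + 1) / x n| : EReal) :=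
      hfreq.mono fun n hn => EReal.coe_le_coe_iff.2 hn
    exact lt_of_lt_of_le (EReal.coe_lt_coe_iff.2 (by linarith))
      (le_limsup_of_frequently_le' hcoe)
  -- odd subsequence tends to 0
  have hodd : Tendsto (fun m : ℕ => |x (2 * m + 1 + 1) / x (2 * m + 1)|) atTop (𝓝 0) := by
    have h2 : ∀ᶠ n in atTop, |g c hne (n + 1)| / |g c hne n| ≤ 2 :=
      hrat1.eventually (eventually_le_nhds (by norm_num))
    have h2m1 : Tendsto (fun m : ℕ => 2 * m + 1) atTop atTop :=
      tendsto_atTop_mono (fun m => by simp only [id_eq]; omega) tendsto_id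
    refine squeeze_zero' (g := fun m : ℕ => 2 * (1 / (2 * (m : ℝ) + 3)))
      (Eventually.of_forall fun m => abs_nonneg _) ?_ ?_
    · filter_upwards [h2m1.eventually h2] with m hm
      rw [hufact (2 * m + 1)]
      exact mul_le_mul hm (q_odd ht1 m)
        (le_of_lt (div_pos (P_pos ht0 _) (P_pos ht0 _))) (by norm_num)
    · have hden : Tendsto (fun m : ℕ => 2 * (m : ℝ) + 3) atTop atTop := by
        apply tendsto_atTop_add_const_right
        exact tendsto_natCast_atTop_atTop.const_mul_atTop (by norm_num)
      have h0 : Tendsto (fun m : ℕ => 1 / (2 * (m : ℝ) + 3)) atTop (𝓝 0) :=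
        tendsto_const_nhds.div_atTop hden
      simpa using h0.const_mul 2
  -- liminf = 0
  have hliminf : liminf (fun n : ℕ => (↑|x (n + 1) / x n| : EReal)) atTop = 0 := by
    apply le_antisymm
    · apply EReal.le_of_forall_lt_iff_le.1
      intro z hz
      have hz' : (0 : ℝ) < z := EReal.coe_lt_coe_iff.1 (by
        rwa [EReal.coe_zero])
      have hfreq : ∃ᶠ n in atTop, |x (n + 1) / x n| ≤ z := by
        rw [frequently_atTop]
        intro N
        obtain ⟨M, hM⟩ := eventually_atTop.1 (hodd.eventually (eventually_le_nhds hz'))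
        have h1 : N ≤ 2 * max M N + 1 := by
          have := le_max_right M N; omega
        exact ⟨2 * max M N + 1, h1, hM _ (le_max_left _ _)⟩
      exact liminf_le_of_frequently_le' (hfreq.mono fun n hn => EReal.coe_le_coe_iff.2 hn)
    · exact le_liminf_of_le (by isBoundedDefault)
        (Eventually.of_forall fun n => EReal.coe_nonneg.2 (abs_nonneg _))
  exact ⟨hsabs, hliminf, hlimsup⟩

end Stmt12Aux

theorem stmt_12 :
    LinearIndependent ℝ
      (fun s : {s : ℝ // 1 < s} => fun n : ℕ => seqA (n + 1) s.1) ∧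
    Module.rank ℝ
      (Submodule.span ℝ
        (Set.range fun s : {s : ℝ // 1 < s} => fun n : ℕ => seqA (n + 1) s.1))
      = Cardinal.continuum ∧
    ∀ x ∈ Submodule.span ℝ
        (Set.range fun s : {s : ℝ // 1 < s} => fun n : ℕ => seqA (n + 1) s.1),
      x ≠ 0 →
        Summable (fun n => |x n|) ∧
        liminf (fun n : ℕ => (↑|x (n + 1) / x n| : EReal)) atTop = 0 ∧
        limsup (fun n : ℕ => (↑|x (n + 1) / x n| : EReal)) atTop = ⊤ := by
  classical
  have hli : LinearIndependent ℝ
      (fun s : {s : ℝ // 1 < s} => fun n : ℕ => seqA (n + 1) s.1) := by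
    rw [linearIndependent_iff]
    intro l hl
    by_contra hl0
    have hne : l.support.Nonempty := Finsupp.support_nonempty_iff.2 hl0
    have hx : ∀ n, (∑ j ∈ l.support, l j * seqA (n + 1) j.1) = 0 := by
      intro n
      rw [Finsupp.linearCombination_apply] at hl
      have h := congrFun hl n
      simpa [Finsupp.sum, Finset.sum_apply, Pi.smul_apply, smul_eq_mul] using h
    have hg0 : ∀ n, Stmt12Aux.g l hne n = 0 := by
      intro n
      have h := (Stmt12Aux.factor l hne n).symm.trans (hx n)
      exact (mul_eq_zero.1 h).resolve_right
        (Stmt12Aux.P_pos (lt_trans one_pos (Stmt12Aux.tmin l hne).2) n).ne'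
    have h1 : Tendsto (Stmt12Aux.g l hne) atTop (𝓝 (l (Stmt12Aux.tmin l hne))) :=
      Stmt12Aux.g_tendsto l hne
    have h2 : Tendsto (Stmt12Aux.g l hne) atTop (𝓝 0) := by
      have hfun : Stmt12Aux.g l hne = fun _ => 0 := funext hg0
      rw [hfun]
      exact tendsto_const_nhds
    have h3 := tendsto_nhds_unique h1 h2
    exact Finsupp.mem_support_iff.1 (Finset.min'_mem _ _) h3
  refine ⟨hli, ?_, ?_⟩
  · rw [rank_span hli, Cardinal.mk_range_eq _ hli.injective]
    have h4 : Cardinal.mk {s : ℝ // 1 < s} = Cardinal.mk (Set.Ioi (1 : ℝ)) :=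
      Cardinal.mk_congr (Equiv.subtypeEquivRight fun x => (Set.mem_Ioi).symm)
    rw [h4]
    exact Cardinal.mk_Ioi_real 1
  · intro x hxmem hx0
    obtain ⟨c, hc⟩ := (Finsupp.mem_span_range_iff_exists_finsupp).1 hxmem
    have hcne : c ≠ 0 := by
      rintro rfl
      apply hx0
      simpa using hc.symm
    have hne : c.support.Nonempty := Finsupp.support_nonempty_iff.2 hcne
    apply Stmt12Aux.props c hne x
    intro n
    have h := congrFun hc n
    simpa [Finsupp.sum, Finset.sum_apply, Pi.smul_apply, smul_eq_mul] using h.symm
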